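/- If f lies on interval [u,v] of the shortest s–t path and d(s,u) + d(u,t ∣ avoid f) > d(s,v ∣ avoid f) + d(v,t), then the shortest s-to-v path avoiding f does not pass through u. -/

import Mathlib

open scoped ENNReal

/-- Cost of a walk, given as a list of vertices, in a weighted digraph:
the sum of the weights of consecutive pairs.  Non-edges have weight `⊤`. -/
noncomputable def walkCost {V : Type*} (w : V → V → ℝ≥0∞) : List V → ℝ≥0∞
  | [] => 0
  | [_] => 0
  | a :: b :: l => w a b + walkCost w (b :: l)

/-- `p` is a walk from `s` to `t`. -/
def IsWalkFromTo {V : Type*} (s t : V) (p : List V) : Prop :=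
  p.head? = some s ∧ p.getLast? = some t

/-- `d(s,t ∣ avoid A)`: the length of the shortest walk from `s` to `t`
avoiding every vertex of `A` (`⊤` if none exists). -/
noncomputable def dAvoid {V : Type*} (w : V → V → ℝ≥0∞) (s t : V) (A : Set V) : ℝ≥0∞ :=
  ⨅ p ∈ {p : List V | IsWalkFromTo s t p ∧ ∀ x ∈ p, x ∉ A}, walkCost w p

/-- All-pairs unique shortest paths. -/
def UniqueSP {V : Type*} (w : V → V → ℝ≥0∞) : Prop :=
  ∀ a b : V, dAvoid w a b ∅ ≠ ⊤ →
    ∃! p : List V, IsWalkFromTo a b p ∧ walkCost w p = dAvoid w a b ∅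

/-- The set of vertices of the path `P` with positions in `[iu, iv]`:
the interval `[u, v]` on `P`. -/
def intervalSet {V : Type*} (P : List V) (iu iv : ℕ) : Set V :=
  {x | ∃ i : ℕ, iu ≤ i ∧ i ≤ iv ∧ P[i]? = some x}

section Helpers

variable {V : Type*} (w : V → V → ℝ≥0∞)

lemma walkCost_append (x : V) : ∀ (L M : List V),
    walkCost w (L ++ x :: M) = walkCost w (L ++ [x]) + walkCost w (x :: M)
  | [], M => by simp [walkCost]
  | [a], M => by simp [walkCost]
  | a :: b :: L, M => by
      have ih := walkCost_append x (b :: L) M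
      simp only [List.cons_append, List.append_eq, walkCost] at ih ⊢
      rw [ih, add_assoc]

lemma head?_append_cons (A : List V) (x : V) (M : List V) :
    (A ++ x :: M).head? = (A ++ [x]).head? := by
  cases A <;> simp

lemma dAvoid_le {a b : V} {A : Set V} {p : List V}
    (hp : IsWalkFromTo a b p) (hA : ∀ x ∈ p, x ∉ A) :
    dAvoid w a b A ≤ walkCost w p := by
  conv_lhs => rw [dAvoid]
  exact iInf₂_le p ⟨hp, hA⟩

lemma dAvoid_empty_le {a b : V} {A : Set V} :
    dAvoid w a b ∅ ≤ dAvoid w a b A := by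
  conv_rhs => rw [dAvoid]
  exact le_iInf₂ fun p hp => dAvoid_le w hp.1 (by simp)

lemma walk_append {a b c : V} {p q : List V}
    (hp : IsWalkFromTo a b p) (hq : IsWalkFromTo b c q) :
    IsWalkFromTo a c (p ++ q.tail) ∧
      walkCost w (p ++ q.tail) = walkCost w p + walkCost w q := by
  obtain ⟨hp1, hp2⟩ := hp
  obtain ⟨hq1, hq2⟩ := hq
  obtain ⟨L, rfl⟩ := List.getLast?_eq_some_iff.mp hp2
  obtain ⟨l, rfl⟩ : ∃ l, q = b :: l := by
    cases q with
    | nil => simp at hq1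
    | cons h l => exact ⟨l, by rw [show h = b by simpa using hq1]⟩
  · have hassoc : (L ++ [b]) ++ (b :: l).tail = L ++ b :: l := by simp
    refine ⟨⟨?_, ?_⟩, ?_⟩
    · rw [hassoc, head?_append_cons]
      simpa using hp1
    · cases l with
      | nil =>
        have : b = c := by simpa using hq2
        subst this; simp
      | cons h' l' =>
        rw [hassoc, List.getLast?_append, hq2]
        rfl
    · rw [hassoc, walkCost_append]

lemma dAvoid_le_cost_add {a b c : V} {A : Set V} {p : List V}
    (hp : IsWalkFromTo a b p) (hA : ∀ x ∈ p, x ∉ A) :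
    dAvoid w a c A ≤ walkCost w p + dAvoid w b c A := by
  have heq : walkCost w p + dAvoid w b c A =
      ⨅ q ∈ {q : List V | IsWalkFromTo b c q ∧ ∀ x ∈ q, x ∉ A},
        (walkCost w p + walkCost w q) := by
    rw [dAvoid, ENNReal.add_iInf]
    exact iInf_congr fun q => ENNReal.add_iInf
  rw [heq]
  refine le_iInf₂ fun q hq => ?_
  obtain ⟨hw, hc⟩ := walk_append w hp hq.1
  rw [← hc]
  refine dAvoid_le w hw fun x hx => ?_
  rcases List.mem_append.mp hx with h | h
  · exact hA x h
  · exact hq.2 x (List.mem_of_mem_tail h)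

lemma dAvoid_le_add_cost {a b c : V} {A : Set V} {q : List V}
    (hq : IsWalkFromTo b c q) (hA : ∀ x ∈ q, x ∉ A) :
    dAvoid w a c A ≤ dAvoid w a b A + walkCost w q := by
  have heq : dAvoid w a b A + walkCost w q =
      ⨅ p ∈ {p : List V | IsWalkFromTo a b p ∧ ∀ x ∈ p, x ∉ A},
        (walkCost w p + walkCost w q) := by
    rw [dAvoid, add_comm, ENNReal.add_iInf]
    refine iInf_congr fun p => ?_
    rw [ENNReal.add_iInf]
    exact iInf_congr fun _ => add_comm _ _
  rw [heq]
  refine le_iInf₂ fun p hp => ?_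
  obtain ⟨hw, hc⟩ := walk_append w hp.1 hq
  rw [← hc]
  refine dAvoid_le w hw fun x hx => ?_
  rcases List.mem_append.mp hx with h | h
  · exact hp.2 x h
  · exact hA x (List.mem_of_mem_tail h)

/-- On the unique shortest path, no vertex other than `t` can occur at
two distinct positions. -/
lemma no_later_dup {s t x : V} {P : List V} (husp : UniqueSP w)
    (hP : IsWalkFromTo s t P) (hPc : walkCost w P = dAvoid w s t ∅)
    (hfin : dAvoid w s t ∅ ≠ ⊤)
    {i j : ℕ} (hij : i < j) (hi : P[i]? = some x) (hj : P[j]? = some x)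
    (hxt : x ≠ t) : False := by
  obtain ⟨hjlen, hjx⟩ := List.getElem?_eq_some_iff.mp hj
  obtain ⟨hilen, hix⟩ := List.getElem?_eq_some_iff.mp hi
  have hPne : P ≠ [] := by rintro rfl; simp at hjlen
  -- j is not the last index
  have hlast : P.getLast hPne = t := by
    have := hP.2
    rw [List.getLast?_eq_getLast hPne] at this
    simpa using this
  have hlast' : P[P.length - 1] = t := by
    rw [← List.getLast_eq_getElem hPne]; exact hlast
  have hjne : j ≠ P.length - 1 := by
    intro h
    subst h
    exact hxt (hjx.symm.trans hlast')
  have hj1 : j + 1 < P.length := by omega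
  -- decompositions
  have hdropi : P.drop i = x :: P.drop (i + 1) := by
    rw [List.drop_eq_getElem_cons hilen, hix]
  have hPdec : P = P.take i ++ x :: P.drop (i + 1) := by
    rw [← hdropi, List.take_append_drop]
  set M := P.drop (i + 1) with hM
  have hMj : M[j - i - 1]? = some x := by
    rw [hM, List.getElem?_drop]
    have : i + 1 + (j - i - 1) = j := by omega
    rw [this, hj]
  obtain ⟨hMjlen, hMjx⟩ := List.getElem?_eq_some_iff.mp hMj
  have hMdec : M = M.take (j - i - 1) ++ x :: M.drop (j - i) := by
    have hidx : j - i - 1 + 1 = j - i := by omega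
    have h1 : M.drop (j - i - 1) = x :: M.drop (j - i) := by
      rw [List.drop_eq_getElem_cons hMjlen, hMjx, hidx]
    rw [← h1, List.take_append_drop]
  have hMdropj : M.drop (j - i) = P.drop (j + 1) := by
    rw [hM, List.drop_drop]
    congr 1
    omega
  -- cost computation
  have hcostP : walkCost w P =
      walkCost w (P.take i ++ [x]) +
        (walkCost w ((x :: M.take (j - i - 1)) ++ [x]) +
          walkCost w (x :: P.drop (j + 1))) := by
    conv_lhs => rw [hPdec]
    rw [walkCost_append]
    congr 1
    have : x :: M = (x :: M.take (j - i - 1)) ++ x :: M.drop (j - i) := by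
      conv_lhs => rw [hMdec]
      simp
    rw [this, walkCost_append, hMdropj]
  -- the shorter walk
  set P' := P.take i ++ x :: P.drop (j + 1) with hP'
  have hcostP' : walkCost w P' =
      walkCost w (P.take i ++ [x]) + walkCost w (x :: P.drop (j + 1)) := by
    rw [hP', walkCost_append]
  have hle : walkCost w P' ≤ walkCost w P := by
    rw [hcostP, hcostP']
    exact add_le_add_right (le_add_left le_rfl) _
  have hdropj1ne : P.drop (j + 1) ≠ [] := by
    simp only [ne_eq, List.drop_eq_nil_iff]
    omega
  have hP'walk : IsWalkFromTo s t P' := by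
    constructor
    · rw [hP', head?_append_cons, ← head?_append_cons, ← hPdec]
      exact hP.1
    · rw [hP']
      have h1 : (P.take i ++ x :: P.drop (j + 1)).getLast? =
          (P.drop (j + 1)).getLast? := by
        rw [List.getLast?_append]
        have h2 : (x :: P.drop (j + 1)).getLast? = (P.drop (j + 1)).getLast? := by
          cases h : P.drop (j + 1) with
          | nil => exact absurd h hdropj1ne
          | cons a l => exact List.getLast?_cons_cons ..
        rw [h2]
        cases h : (P.drop (j+1)).getLast? with
        | none => simp [List.getLast?_eq_none_iff.mp h] at hdropj1ne
        | some a => rfl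
      rw [h1]
      have h3 : P.getLast? = (P.drop (j + 1)).getLast? := by
        conv_lhs => rw [← List.take_append_drop (j + 1) P]
        rw [List.getLast?_append]
        cases h : (P.drop (j+1)).getLast? with
        | none => simp [List.getLast?_eq_none_iff.mp h] at hdropj1ne
        | some a => rfl
      rw [← h3]
      exact hP.2
  have hP'cost : walkCost w P' = dAvoid w s t ∅ := by
    refine le_antisymm (hPc ▸ hle) ?_
    exact dAvoid_le w hP'walk (by simp)
  obtain ⟨R, hR, hRuniq⟩ := husp s t hfin
  have e1 : P' = R := hRuniq P' ⟨hP'walk, hP'cost⟩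
  have e2 : P = R := hRuniq P ⟨hP, hPc⟩
  have : P'.length = P.length := by rw [e1, e2]
  rw [hP'] at this
  simp only [List.length_append, List.length_cons, List.length_take, List.length_drop] at this
  omega

end Helpers

/-- **Skipping lemma.**  If `f` lies on the interval `[u,v]` of the unique shortest
`s`–`t` path and `d(s,u) + d(u,t ∣ avoid f) > d(s,v ∣ avoid f) + d(v,t)`, then the
shortest `s`-to-`v` path avoiding `f` does not pass through `u`. -/
theorem shortest_path_skips_u {V : Type*} (w : V → V → ℝ≥0∞)
    (husp : UniqueSP w)
    (s t u v f : V) (P : List V)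
    (hP : IsWalkFromTo s t P) (hPcost : walkCost w P = dAvoid w s t ∅)
    (iu iv ifi : ℕ)
    (hu : P[iu]? = some u) (hv : P[iv]? = some v) (hf : P[ifi]? = some f)
    (huf : iu ≤ ifi) (hfv : ifi ≤ iv)
    (hfs : f ≠ s) (hft : f ≠ t)
    (hgt : dAvoid w s u ∅ + dAvoid w u t {f} > dAvoid w s v {f} + dAvoid w v t ∅)
    (Q : List V) (hQ : IsWalkFromTo s v Q) (hfQ : f ∉ Q)
    (hQcost : walkCost w Q = dAvoid w s v {f}) :
    u ∉ Q := by
  intro hmem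
  -- f ≠ v since v ∈ Q and f ∉ Q
  have hvQ : v ∈ Q := by
    obtain ⟨L, hL⟩ := List.getLast?_eq_some_iff.mp hQ.2
    rw [hL]; simp
  have hfv' : f ≠ v := fun h => hfQ (h ▸ hvQ)
  -- RHS of hgt is finite
  have hrhs_fin : dAvoid w s v {f} + dAvoid w v t ∅ ≠ ⊤ := ne_top_of_lt hgt
  have hsvf_fin : dAvoid w s v {f} ≠ ⊤ := fun h => hrhs_fin (by rw [h, top_add])
  have hvt_fin : dAvoid w v t ∅ ≠ ⊤ := fun h => hrhs_fin (by rw [h, add_top])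
  -- d(s,t) is finite
  have hQavoid : ∀ x ∈ Q, x ∉ ({f} : Set V) := by
    intro x hx hxf
    exact hfQ ((Set.mem_singleton_iff.mp hxf) ▸ hx)
  have hst_le : dAvoid w s t ∅ ≤ dAvoid w s v {f} + dAvoid w v t ∅ := by
    calc dAvoid w s t ∅ ≤ walkCost w Q + dAvoid w v t ∅ :=
          dAvoid_le_cost_add w hQ (by simp)
      _ = dAvoid w s v {f} + dAvoid w v t ∅ := by rw [hQcost]
  have hst_fin : dAvoid w s t ∅ ≠ ⊤ := by
    intro h
    exact hrhs_fin (top_le_iff.mp (h ▸ hst_le))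
  -- indices
  have hivlen : iv < P.length := (List.getElem?_eq_some_iff.mp hv).1
  have hfiv : ifi < iv := by
    rcases lt_or_eq_of_le hfv with h | h
    · exact h
    · exact absurd (by rw [← h] at hv; rw [hf] at hv; simpa using hv) hfv'
  -- the suffix S of P from position iv
  set S := P.drop iv with hSdef
  have hSne : S ≠ [] := by simp [hSdef]; omega
  have hShead : S.head? = some v := by rw [hSdef, List.head?_drop, hv]
  have hSlast : S.getLast? = some t := by
    have : P.getLast? = S.getLast? := by
      conv_lhs => rw [← List.take_append_drop iv P]
      rw [List.getLast?_append]
      cases h : S.getLast? with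
      | none => simp [List.getLast?_eq_none_iff.mp h] at hSne
      | some a => rfl
    rw [← this]; exact hP.2
  have hSwalk : IsWalkFromTo v t S := ⟨hShead, hSlast⟩
  -- f ∉ S : otherwise f occurs twice on P
  have hfS : ∀ x ∈ S, x ∉ ({f} : Set V) := by
    intro x hx hxf
    rw [Set.mem_singleton_iff] at hxf
    subst hxf
    obtain ⟨k, hk, hkx⟩ := List.getElem_of_mem (by exact hx)
    have hkj : P[iv + k]? = some x := by
      rw [← List.getElem?_drop, ← hSdef]
      rw [List.getElem?_eq_some_iff]
      exact ⟨hk, hkx⟩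
    exact no_later_dup w husp hP hPcost hst_fin
      (show ifi < iv + k by omega) hf hkj hft
  -- cost of S is at most d(v,t)
  have hivlen' : iv < P.length := hivlen
  have hdropiv : P.drop iv = v :: P.drop (iv + 1) := by
    rw [List.drop_eq_getElem_cons hivlen]
    congr 1
    exact (List.getElem?_eq_some_iff.mp hv).2
  have hPdec : P = P.take iv ++ v :: P.drop (iv + 1) := by
    rw [← hdropiv, List.take_append_drop]
  have hprewalk : IsWalkFromTo s v (P.take iv ++ [v]) := by
    constructor
    · rw [← head?_append_cons, ← hPdec]; exact hP.1
    · exact List.getLast?_concat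
  have hcostsplit : walkCost w P = walkCost w (P.take iv ++ [v]) + walkCost w S := by
    conv_lhs => rw [hPdec]
    rw [walkCost_append, hSdef, hdropiv]
  have hpre_fin : walkCost w (P.take iv ++ [v]) ≠ ⊤ := by
    intro h
    apply hst_fin
    rw [← hPcost, hcostsplit, h, top_add]
  have hS_le : walkCost w S ≤ dAvoid w v t ∅ := by
    have h1 : dAvoid w s t ∅ ≤ walkCost w (P.take iv ++ [v]) + dAvoid w v t ∅ :=
      dAvoid_le_cost_add w hprewalk (by simp)
    have h2 : walkCost w (P.take iv ++ [v]) + walkCost w S ≤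
        walkCost w (P.take iv ++ [v]) + dAvoid w v t ∅ := by
      rw [← hcostsplit, hPcost]; exact h1
    exact (ENNReal.add_le_add_iff_left hpre_fin).mp h2
  -- key inequality: d(u,t|f) ≤ d(u,v|f) + d(v,t)
  have hut : dAvoid w u t {f} ≤ dAvoid w u v {f} + dAvoid w v t ∅ :=
    calc dAvoid w u t {f} ≤ dAvoid w u v {f} + walkCost w S :=
          dAvoid_le_add_cost w hSwalk hfS
      _ ≤ dAvoid w u v {f} + dAvoid w v t ∅ := add_le_add_right hS_le _
  -- split Q at u
  obtain ⟨Q1, Q2, rfl⟩ := List.append_of_mem hmem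
  have hQ1walk : IsWalkFromTo s u (Q1 ++ [u]) := by
    constructor
    · rw [← head?_append_cons]; exact hQ.1
    · exact List.getLast?_concat
  have hQ2walk : IsWalkFromTo u v (u :: Q2) := by
    constructor
    · rfl
    · have := hQ.2
      rw [List.getLast?_append] at this
      cases h : (u :: Q2).getLast? with
      | none => simp at h
      | some a => rw [h] at this; simpa using this
  have hQsplit : walkCost w (Q1 ++ u :: Q2) =
      walkCost w (Q1 ++ [u]) + walkCost w (u :: Q2) := walkCost_append w u Q1 Q2
  have hQ1avoid : ∀ x ∈ Q1 ++ [u], x ∉ ({f} : Set V) := by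
    intro x hx
    apply hQavoid
    rcases List.mem_append.mp hx with h | h
    · exact List.mem_append_left _ h
    · simp at h; subst h; exact hmem
  have hQ2avoid : ∀ x ∈ u :: Q2, x ∉ ({f} : Set V) := by
    intro x hx
    apply hQavoid
    rcases List.mem_cons.mp hx with h | h
    · subst h; exact hmem
    · exact List.mem_append_right _ (List.mem_cons_of_mem _ h)
  -- d(s,u) + d(u,v|f) ≤ d(s,v|f)
  have hsplit_le : dAvoid w s u ∅ + dAvoid w u v {f} ≤ dAvoid w s v {f} := by
    calc dAvoid w s u ∅ + dAvoid w u v {f}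
        ≤ dAvoid w s u {f} + dAvoid w u v {f} :=
          add_le_add_left (dAvoid_empty_le w) _
      _ ≤ walkCost w (Q1 ++ [u]) + walkCost w (u :: Q2) :=
          add_le_add (dAvoid_le w hQ1walk hQ1avoid) (dAvoid_le w hQ2walk hQ2avoid)
      _ = walkCost w (Q1 ++ u :: Q2) := hQsplit.symm
      _ = dAvoid w s v {f} := hQcost
  -- final contradiction
  have hfinal : dAvoid w s u ∅ + dAvoid w u t {f} ≤
      dAvoid w s v {f} + dAvoid w v t ∅ := by
    calc dAvoid w s u ∅ + dAvoid w u t {f}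
        ≤ dAvoid w s u ∅ + (dAvoid w u v {f} + dAvoid w v t ∅) :=
          add_le_add_right hut _
      _ = (dAvoid w s u ∅ + dAvoid w u v {f}) + dAvoid w v t ∅ := by
          rw [add_assoc]
      _ ≤ dAvoid w s v {f} + dAvoid w v t ∅ := add_le_add_left hsplit_le _
  exact hgt.not_ge hfinal
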